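/- Let ε > 0. The scalar regularization ρ_ε : ℝ → ℝ is twice continuously differentiable on ℝ (class C²), nonnegative, and convex. -/

import Mathlib

noncomputable def rhoEps1 (ε : ℝ) (z : ℝ) : ℝ :=
  if ε ≤ |z| then |z| - (1 - 2 / Real.pi) * ε
  else (2 * ε / Real.pi) * (1 - Real.cos (Real.pi * |z| / (2 * ε)))

/-- the scalar regularization `ρ_ε : ℝ → ℝ` is of class `C²`,
nonnegative, and convex. -/
theorem rhoEps1_contDiff_nonneg_convex (ε : ℝ) (hε : 0 < ε) :
    ContDiff ℝ 2 (rhoEps1 ε) ∧ (∀ z : ℝ, 0 ≤ rhoEps1 ε z) ∧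
      ConvexOn ℝ Set.univ (rhoEps1 ε) := by
  have hπ := Real.pi_pos
  set c : ℝ := Real.pi / (2 * ε) with hc
  have hc0 : 0 < c := by positivity
  have hcε : c * ε = Real.pi / 2 := by rw [hc]; field_simp
  set A : ℝ → ℝ := fun z => -z - (1 - 2 / Real.pi) * ε with hAdef
  set B : ℝ → ℝ := fun z => (2 * ε / Real.pi) * (1 - Real.cos (c * z)) with hBdef
  set C : ℝ → ℝ := fun z => z - (1 - 2 / Real.pi) * ε with hCdef
  -- equalities on pieces
  have hA : ∀ z : ℝ, z ≤ -ε → rhoEps1 ε z = A z := by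
    intro z hz
    have habs : |z| = -z := abs_of_nonpos (by linarith)
    have h2 : ε ≤ -z := by linarith
    have : ε ≤ |z| := by rw [habs]; linarith
    simp [rhoEps1, habs, h2, hAdef]
  have hC : ∀ z : ℝ, ε ≤ z → rhoEps1 ε z = C z := by
    intro z hz
    have habs : |z| = z := abs_of_nonneg (by linarith)
    have : ε ≤ |z| := by rw [habs]; exact hz
    simp [rhoEps1, habs, hz, hCdef]
  have hcosabs : ∀ z : ℝ, Real.cos (Real.pi * |z| / (2 * ε)) = Real.cos (c * z) := by
    intro z
    have h1 : Real.pi * |z| / (2 * ε) = |c * z| := by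
      rw [abs_mul, abs_of_pos hc0, hc]
      field_simp
      try ring
    rw [h1, Real.cos_abs]
  have hB : ∀ z : ℝ, z ∈ Set.Icc (-ε) ε → rhoEps1 ε z = B z := by
    intro z hz
    rcases lt_or_ge (|z|) ε with h | h
    · have : ¬ ε ≤ |z| := not_le.mpr h
      simp [rhoEps1, this, hcosabs z, hBdef]
    · have habs : |z| = ε := le_antisymm (abs_le.mpr ⟨hz.1, hz.2⟩) h
      have hcz : Real.cos (c * z) = 0 := by
        rw [← Real.cos_abs, abs_mul, abs_of_pos hc0, habs, hcε, Real.cos_pi_div_two]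
      have : ε ≤ |z| := h
      simp only [rhoEps1, if_pos this, habs, hBdef, hcz, le_refl, if_true]
      field_simp
      ring
  -- derivatives of pieces
  have hA' : ∀ z : ℝ, HasDerivAt A (-1) z := by
    intro z
    simpa [hAdef] using ((hasDerivAt_id z).neg.sub_const ((1 - 2 / Real.pi) * ε))
  have hC' : ∀ z : ℝ, HasDerivAt C 1 z := by
    intro z
    simpa [hCdef] using ((hasDerivAt_id z).sub_const ((1 - 2 / Real.pi) * ε))
  have hcoeff : 2 * ε / Real.pi * c = 1 := by rw [hc]; field_simp
  have hB' : ∀ z : ℝ, HasDerivAt B (Real.sin (c * z)) z := by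
    intro z
    have h1 : HasDerivAt (fun z : ℝ => c * z) c z := by
      simpa using (hasDerivAt_id z).const_mul c
    have h2 : HasDerivAt (fun z : ℝ => Real.cos (c * z)) (-Real.sin (c * z) * c) z :=
      (Real.hasDerivAt_cos (c * z)).comp z h1
    have h3 := ((hasDerivAt_const z (1 : ℝ)).sub h2).const_mul (2 * ε / Real.pi)
    convert h3 using 1
    all_goals try rfl
    rw [show 2 * ε / Real.pi * (0 - -Real.sin (c * z) * c)
        = (2 * ε / Real.pi * c) * Real.sin (c * z) from by ring, hcoeff, one_mul]
  -- candidate first and second derivatives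
  set φ : ℝ → ℝ := fun z => if z ≤ -ε then -1 else if z ≤ ε then Real.sin (c * z) else 1
    with hφdef
  set ψ : ℝ → ℝ := fun z => if |z| ≤ ε then c * Real.cos (c * z) else 0 with hψdef
  have hsinε : Real.sin (c * ε) = 1 := by rw [hcε, Real.sin_pi_div_two]
  have hsinnegε : Real.sin (c * -ε) = -1 := by
    rw [mul_neg, Real.sin_neg, hcε, Real.sin_pi_div_two]
  have hcosε : Real.cos (c * ε) = 0 := by rw [hcε, Real.cos_pi_div_two]
  have hcosnegε : Real.cos (c * -ε) = 0 := by rw [mul_neg, Real.cos_neg, hcosε]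
  have hnε : -ε < ε := by linarith
  -- φ agrees with each piece's derivative formulas on the relevant closed sets:
  have hρ' : ∀ z : ℝ, HasDerivAt (rhoEps1 ε) (φ z) z := by
    intro z
    rcases lt_trichotomy z (-ε) with h | h | h
    · have heq : rhoEps1 ε =ᶠ[nhds z] A :=
        Filter.eventuallyEq_of_mem (Iio_mem_nhds h) (fun x hx => hA x (le_of_lt hx))
      have : φ z = -1 := by simp [hφdef, le_of_lt h]
      rw [this]
      exact (hA' z).congr_of_eventuallyEq heq
    · subst h
      have h1 : HasDerivWithinAt (rhoEps1 ε) (-1) (Set.Iic (-ε)) (-ε) :=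
        ((hA' (-ε)).hasDerivWithinAt).congr (fun x hx => hA x hx) (hA (-ε) le_rfl)
      have h2 : HasDerivWithinAt (rhoEps1 ε) (-1) (Set.Icc (-ε) ε) (-ε) := by
        have := ((hB' (-ε)).hasDerivWithinAt (s := Set.Icc (-ε) ε)).congr
          (fun x hx => hB x hx) (hB (-ε) ⟨le_rfl, hnε.le⟩)
        rwa [hsinnegε] at this
      have hmem : Set.Iic (-ε) ∪ Set.Icc (-ε) ε ∈ nhds (-ε) := by
        apply Filter.mem_of_superset (Iio_mem_nhds hnε)
        intro x hx
        rcases le_total x (-ε) with hx' | hx'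
        · exact Or.inl hx'
        · exact Or.inr ⟨hx', le_of_lt hx⟩
      have : φ (-ε) = -1 := by simp [hφdef]
      rw [this]
      exact (h1.union h2).hasDerivAt hmem
    · rcases lt_trichotomy z ε with h2 | h2 | h2
      · have heq : rhoEps1 ε =ᶠ[nhds z] B :=
          Filter.eventuallyEq_of_mem (Ioo_mem_nhds h h2)
            (fun x hx => hB x ⟨hx.1.le, hx.2.le⟩)
        have : φ z = Real.sin (c * z) := by
          simp [hφdef, not_le.mpr h, h2.le]
        rw [this]
        exact (hB' z).congr_of_eventuallyEq heq
      · subst z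
        have h1 : HasDerivWithinAt (rhoEps1 ε) 1 (Set.Icc (-ε) ε) ε := by
          have := ((hB' ε).hasDerivWithinAt (s := Set.Icc (-ε) ε)).congr
            (fun x hx => hB x hx) (hB ε ⟨hnε.le, le_rfl⟩)
          rwa [hsinε] at this
        have h3 : HasDerivWithinAt (rhoEps1 ε) 1 (Set.Ici ε) ε :=
          ((hC' ε).hasDerivWithinAt).congr (fun x hx => hC x hx) (hC ε le_rfl)
        have hmem : Set.Icc (-ε) ε ∪ Set.Ici ε ∈ nhds ε := by
          apply Filter.mem_of_superset (Ioi_mem_nhds hnε)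
          intro x hx
          rcases le_total x ε with hx' | hx'
          · exact Or.inl ⟨le_of_lt hx, hx'⟩
          · exact Or.inr hx'
        have : φ ε = 1 := by
          simp [hφdef, hsinε, not_le.mpr hnε]
        rw [this]
        exact (h1.union h3).hasDerivAt hmem
      · have heq : rhoEps1 ε =ᶠ[nhds z] C :=
          Filter.eventuallyEq_of_mem (Ioi_mem_nhds h2) (fun x hx => hC x (le_of_lt hx))
        have : φ z = 1 := by
          simp [hφdef, not_le.mpr h2, not_le.mpr (lt_trans hnε h2)]
        rw [this]
        exact (hC' z).congr_of_eventuallyEq heq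
  -- φ agrees with pieces
  have hφA : ∀ x : ℝ, x ≤ -ε → φ x = -1 := fun x hx => by simp [hφdef, hx]
  have hφB : ∀ x : ℝ, x ∈ Set.Icc (-ε) ε → φ x = Real.sin (c * x) := by
    intro x hx
    rcases eq_or_lt_of_le hx.1 with h | h
    · rw [← h]
      rw [(by simp [hφdef] : φ (-ε) = -1), hsinnegε]
    · simp [hφdef, not_le.mpr h, hx.2]
  have hφC : ∀ x : ℝ, ε ≤ x → φ x = 1 := by
    intro x hx
    rcases eq_or_lt_of_le hx with h | h
    · rw [← h]
      exact (by simp [hφdef, not_le.mpr hnε, hsinε] : φ ε = 1)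

    · simp [hφdef, not_le.mpr h, not_le.mpr (lt_trans hnε h)]
  have hsin' : ∀ z : ℝ, HasDerivAt (fun x : ℝ => Real.sin (c * x)) (c * Real.cos (c * z)) z := by
    intro z
    have h1 : HasDerivAt (fun z : ℝ => c * z) c z := by
      simpa using (hasDerivAt_id z).const_mul c
    have := (Real.hasDerivAt_sin (c * z)).comp z h1
    convert this using 1
    all_goals try rfl
    ring
  have hφ' : ∀ z : ℝ, HasDerivAt φ (ψ z) z := by
    intro z
    rcases lt_trichotomy z (-ε) with h | h | h
    · have heq : φ =ᶠ[nhds z] (fun _ => (-1 : ℝ)) :=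
        Filter.eventuallyEq_of_mem (Iio_mem_nhds h) (fun x hx => hφA x (le_of_lt hx))
      have : ψ z = 0 := by
        have : ¬ |z| ≤ ε := by rw [abs_of_nonpos (by linarith)]; push_neg; linarith
        simp [hψdef, this]
      rw [this]
      exact (hasDerivAt_const z (-1 : ℝ)).congr_of_eventuallyEq heq
    · subst h
      have h1 : HasDerivWithinAt φ 0 (Set.Iic (-ε)) (-ε) :=
        ((hasDerivAt_const (-ε) (-1 : ℝ)).hasDerivWithinAt).congr
          (fun x hx => hφA x hx) (hφA (-ε) le_rfl)
      have h2 : HasDerivWithinAt φ 0 (Set.Icc (-ε) ε) (-ε) := by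
        have := ((hsin' (-ε)).hasDerivWithinAt (s := Set.Icc (-ε) ε)).congr
          (fun x hx => hφB x hx) (hφB (-ε) ⟨le_rfl, hnε.le⟩)
        rwa [hcosnegε, mul_zero] at this
      have hmem : Set.Iic (-ε) ∪ Set.Icc (-ε) ε ∈ nhds (-ε) := by
        apply Filter.mem_of_superset (Iio_mem_nhds hnε)
        intro x hx
        rcases le_total x (-ε) with hx' | hx'
        · exact Or.inl hx'
        · exact Or.inr ⟨hx', le_of_lt hx⟩
      have : ψ (-ε) = 0 := by
        have h3 : |(-ε)| ≤ ε := by rw [abs_neg, abs_of_pos hε]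
        simp only [hψdef]
        rw [if_pos h3, hcosnegε, mul_zero]
      rw [this]
      exact (h1.union h2).hasDerivAt hmem
    · rcases lt_trichotomy z ε with h2 | h2 | h2
      · have heq : φ =ᶠ[nhds z] (fun x => Real.sin (c * x)) :=
          Filter.eventuallyEq_of_mem (Ioo_mem_nhds h h2)
            (fun x hx => hφB x ⟨hx.1.le, hx.2.le⟩)
        have : ψ z = c * Real.cos (c * z) := by
          have : |z| ≤ ε := abs_le.mpr ⟨h.le, h2.le⟩
          simp [hψdef, this]
        rw [this]
        exact (hsin' z).congr_of_eventuallyEq heq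
      · subst z
        have h1 : HasDerivWithinAt φ 0 (Set.Icc (-ε) ε) ε := by
          have := ((hsin' ε).hasDerivWithinAt (s := Set.Icc (-ε) ε)).congr
            (fun x hx => hφB x hx) (hφB ε ⟨hnε.le, le_rfl⟩)
          rwa [hcosε, mul_zero] at this
        have h3 : HasDerivWithinAt φ 0 (Set.Ici ε) ε :=
          ((hasDerivAt_const ε (1 : ℝ)).hasDerivWithinAt).congr
            (fun x hx => hφC x hx) (hφC ε le_rfl)
        have hmem : Set.Icc (-ε) ε ∪ Set.Ici ε ∈ nhds ε := by
          apply Filter.mem_of_superset (Ioi_mem_nhds hnε)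
          intro x hx
          rcases le_total x ε with hx' | hx'
          · exact Or.inl ⟨le_of_lt hx, hx'⟩
          · exact Or.inr hx'
        have : ψ ε = 0 := by
          have h4 : |ε| ≤ ε := by rw [abs_of_pos hε]
          simp only [hψdef]
          rw [if_pos h4, hcosε, mul_zero]
        rw [this]
        exact (h1.union h3).hasDerivAt hmem
      · have heq : φ =ᶠ[nhds z] (fun _ => (1 : ℝ)) :=
          Filter.eventuallyEq_of_mem (Ioi_mem_nhds h2) (fun x hx => hφC x (le_of_lt hx))
        have : ψ z = 0 := by
          have : ¬ |z| ≤ ε := by rw [abs_of_pos (lt_trans hε h2)]; push_neg; exact h2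
          simp [hψdef, this]
        rw [this]
        exact (hasDerivAt_const z (1 : ℝ)).congr_of_eventuallyEq heq
  have hρderiv : deriv (rhoEps1 ε) = φ := funext fun z => (hρ' z).deriv
  have hφderiv : deriv φ = ψ := funext fun z => (hφ' z).deriv
  have hψcont : Continuous ψ := by
    rw [hψdef]
    apply Continuous.if_le
    · exact continuous_const.mul (Real.continuous_cos.comp (continuous_const.mul continuous_id))
    · exact continuous_const
    · exact continuous_abs
    · exact continuous_const
    · intro x hx
      rcases abs_eq hε.le |>.mp hx with h | h
      · rw [h, hcosε, mul_zero]
      · rw [h, hcosnegε, mul_zero]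
  have hdiff : Differentiable ℝ (rhoEps1 ε) := fun z => (hρ' z).differentiableAt
  have hφdiff : Differentiable ℝ φ := fun z => (hφ' z).differentiableAt
  have hcd : ContDiff ℝ 2 (rhoEps1 ε) := by
    rw [show (2 : WithTop ℕ∞) = 1 + 1 from rfl, contDiff_succ_iff_deriv]
    refine ⟨hdiff, by simp, ?_⟩
    rw [hρderiv, contDiff_one_iff_deriv, hφderiv]
    exact ⟨hφdiff, hψcont⟩
  refine ⟨hcd, ?_, ?_⟩
  · intro z
    by_cases h : ε ≤ |z|
    · have h2 : (0:ℝ) < 2 / Real.pi * ε := by positivity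
      simp only [rhoEps1, if_pos h]
      nlinarith
    · simp only [rhoEps1, if_neg h]
      have h1 : (0:ℝ) ≤ 2 * ε / Real.pi := by positivity
      have h2 : Real.cos (Real.pi * |z| / (2 * ε)) ≤ 1 := Real.cos_le_one _
      nlinarith
  · apply convexOn_of_deriv2_nonneg convex_univ hcd.continuous.continuousOn
      hdiff.differentiableOn
    · rw [hρderiv]; exact hφdiff.differentiableOn
    · intro x _
      have : deriv^[2] (rhoEps1 ε) x = ψ x := by
        simp only [Function.iterate_succ, Function.iterate_zero, Function.comp_apply, id_eq]
        rw [hρderiv, hφderiv]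
      rw [this, hψdef]
      by_cases h : |x| ≤ ε
      · simp only [if_pos h]
        apply mul_nonneg hc0.le
        apply Real.cos_nonneg_of_mem_Icc
        constructor
        · rw [← hcε]; nlinarith [abs_le.mp h, neg_abs_le x]
        · rw [← hcε]; nlinarith [abs_le.mp h, le_abs_self x]
      · simp [if_neg h]
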